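/- An MN×MN invertible complex matrix A can be expressed as the Kronecker product of an M×M invertible matrix and an N×N invertible matrix if and only if the realignment ℛ(A) (with respect to the factorization MN = M·N) has rank exactly 1. -/

import Mathlib

open Matrix Kronecker

/-- Realignment of an `MN × MN` matrix viewed as an `M × M` block matrix with `N × N`
blocks `A_{ij}`: row `(i,j)` is `vec(A_{ij})ᵀ` (column-stacking `vec`). -/
def realign {m₁ m₂ n₁ n₂ : ℕ} (A : Matrix (Fin m₁ × Fin m₂) (Fin n₁ × Fin n₂) ℂ) :
    Matrix (Fin m₁ × Fin n₁) (Fin n₂ × Fin m₂) ℂ :=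
  Matrix.of fun p q => A (p.1, q.2) (p.2, q.1)

/-- A rank-one matrix over `ℂ` is an outer product. -/
lemma exists_vecMulVec_of_rank_eq_one {m n : Type*} [Fintype m] [Fintype n] [DecidableEq n]
    (A : Matrix m n ℂ) (h : A.rank = 1) :
    ∃ (u : m → ℂ) (v : n → ℂ), A = vecMulVec u v := by
  rw [Matrix.rank] at h
  obtain ⟨w, hw0, hw⟩ := finrank_eq_one_iff'.mp h
  set u : m → ℂ := (w : m → ℂ) with hu
  have hcol : ∀ j : n, ∃ c : ℂ, ∀ i, c * u i = A i j := by
    intro j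
    have hmem : (A.mulVec (Pi.single j 1)) ∈ LinearMap.range A.mulVecLin :=
      ⟨Pi.single j 1, rfl⟩
    obtain ⟨c, hc⟩ := hw ⟨_, hmem⟩
    refine ⟨c, fun i => ?_⟩
    have h1 := congrFun (congrArg Subtype.val hc) i
    simpa [hu, Matrix.mulVec_single] using h1
  choose v hv using hcol
  exact ⟨u, v, by ext i j; rw [vecMulVec_apply, mul_comm]; exact (hv j i).symm⟩

/-- A nonzero outer product has rank one. -/
lemma rank_vecMulVec_eq_one {m n : Type*} [Fintype m] [Fintype n] [DecidableEq n]
    {u : m → ℂ} {v : n → ℂ} (hu : u ≠ 0) (hv : v ≠ 0) :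
    (vecMulVec u v).rank = 1 := by
  have hle : (vecMulVec u v).rank ≤ 1 := by
    rw [vecMulVec_eq Unit u v]
    calc (replicateCol Unit u * replicateRow Unit v).rank ≤ (replicateCol Unit u).rank := rank_mul_le_left _ _
      _ ≤ Fintype.card Unit := rank_le_card_width _
      _ = 1 := Fintype.card_unit
  have hne : vecMulVec u v ≠ 0 := by
    obtain ⟨i, hi⟩ := Function.ne_iff.mp hu
    obtain ⟨j, hj⟩ := Function.ne_iff.mp hv
    intro h0
    have : u i * v j = 0 := by
      have := congrFun (congrFun h0 i) j
      simpa [vecMulVec_apply] using this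
    exact (mul_ne_zero hi hj) this
  have hpos : 0 < (vecMulVec u v).rank := by
    rw [Matrix.rank]
    rw [Module.finrank_pos_iff]
    obtain ⟨i, j, hij⟩ : ∃ i j, vecMulVec u v i j ≠ 0 := by
      by_contra hc
      push_neg at hc
      exact hne (by ext i j; simpa using hc i j)
    have hmem : ((vecMulVec u v).mulVec (Pi.single j 1)) ∈
        LinearMap.range (vecMulVec u v).mulVecLin := ⟨Pi.single j 1, rfl⟩
    refine nontrivial_of_ne ⟨_, hmem⟩ 0 ?_
    intro h0
    have h1 := congrFun (congrArg Subtype.val h0) i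
    simp [Matrix.mulVec_single] at h1
    exact hij h1
  omega

/-- Lemma 2: an invertible `MN×MN` complex matrix `A` is a Kronecker
product of an invertible `M×M` matrix and an invertible `N×N` matrix iff `ℛ(A)` has
rank exactly 1. -/
theorem invertible_kronecker_decomposable_iff_realign_rank_one {M N : ℕ}
    (hM : 0 < M) (hN : 0 < N)
    (A : Matrix (Fin M × Fin N) (Fin M × Fin N) ℂ) (hA : IsUnit A) :
    (∃ (U : Matrix (Fin M) (Fin M) ℂ) (V : Matrix (Fin N) (Fin N) ℂ),
        IsUnit U ∧ IsUnit V ∧ A = U ⊗ₖ V) ↔ (realign A).rank = 1 := by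
  haveI : NeZero M := ⟨hM.ne'⟩
  haveI : NeZero N := ⟨hN.ne'⟩
  constructor
  · rintro ⟨U, V, hU, hV, rfl⟩
    have hre : realign (U ⊗ₖ V) =
        vecMulVec (fun p : Fin M × Fin M => U p.1 p.2)
          (fun q : Fin N × Fin N => V q.2 q.1) := by
      ext ⟨i, k⟩ ⟨l, j⟩
      simp [realign, vecMulVec_apply, kroneckerMap_apply]
    rw [hre]
    have hUne : U ≠ 0 := hU.ne_zero
    have hVne : V ≠ 0 := hV.ne_zero
    apply rank_vecMulVec_eq_one
    · intro h0
      apply hUne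
      ext i k
      simpa using congrFun h0 (i, k)
    · intro h0
      apply hVne
      ext j l
      simpa using congrFun h0 (l, j)
  · intro h
    obtain ⟨u, v, huv⟩ := exists_vecMulVec_of_rank_eq_one _ h
    set U : Matrix (Fin M) (Fin M) ℂ := Matrix.of fun i k => u (i, k) with hUdef
    set V : Matrix (Fin N) (Fin N) ℂ := Matrix.of fun j l => v (l, j) with hVdef
    have hAeq : A = U ⊗ₖ V := by
      ext ⟨i, j⟩ ⟨k, l⟩
      have : realign A (i, k) (l, j) = u (i, k) * v (l, j) := by
        rw [huv]; rfl
      simpa [realign, kroneckerMap_apply, hUdef, hVdef] using this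
    have hdet : A.det ≠ 0 := by
      intro h0
      exact (by simpa [h0] using (Matrix.isUnit_iff_isUnit_det A).mp hA : IsUnit (0 : ℂ)).ne_zero
        rfl
    rw [hAeq, Matrix.det_kronecker] at hdet
    have hUdet : U.det ≠ 0 := fun h0 => hdet (by simp [h0, pow_eq_zero_iff, hN.ne'])
    have hVdet : V.det ≠ 0 := fun h0 => hdet (by simp [h0, pow_eq_zero_iff, hM.ne'])
    exact ⟨U, V, (Matrix.isUnit_iff_isUnit_det U).mpr (isUnit_iff_ne_zero.mpr hUdet),
      (Matrix.isUnit_iff_isUnit_det V).mpr (isUnit_iff_ne_zero.mpr hVdet), hAeq⟩
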